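/- Let A ∈ Z^{d×n} and let U ⊆ [n] with |U| = d index linearly independent columns such that A_U is an integer matrix whose determinant is not ±1. Then there exists a standard unit vector e_j ∈ Z^d that is a non-integer rational combination of the columns of A_U, and consequently the vector z := Σ_{i∈U} {x_i} a_i (the fractional parts of the coefficients in e_j = Σ x_i a_i) is a nonzero integer vector in cone(A_U) whose coefficient vector in the basis A_U has all entries in [0,1) with at least one entry in (0,1). -/

import Mathlib

theorem stmt13 {d : ℕ} (B : Matrix (Fin d) (Fin d) ℤ)
    (hnz : B.det ≠ 0) (hdet : B.det ≠ 1 ∧ B.det ≠ -1) :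
    ∃ j : Fin d, ∃ x : Fin d → ℝ,
      -- e_j is a combination of the columns of B with coefficients x
      (∀ i, ∑ k, (B i k : ℝ) * x k = if i = j then 1 else 0) ∧
      -- the combination is non-integer
      (∃ k, ¬ ∃ m : ℤ, x k = (m : ℝ)) ∧
      -- z = Σ {x_k} b_k is a nonzero integer vector
      (∃ z : Fin d → ℤ, (∀ i, (z i : ℝ) = ∑ k, Int.fract (x k) * (B i k : ℝ)) ∧ z ≠ 0) ∧
      -- the coefficients of z in the basis B lie in [0,1), one of them in (0,1)
      (∀ k, 0 ≤ Int.fract (x k) ∧ Int.fract (x k) < 1) ∧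
      (∃ k, 0 < Int.fract (x k)) := by
  classical
  set A : Matrix (Fin d) (Fin d) ℝ := B.map (Int.cast : ℤ → ℝ) with hA
  have hAdet : A.det ≠ 0 := by
    rw [hA]
    rw [show (B.map (Int.cast : ℤ → ℝ)).det = ((B.det : ℤ) : ℝ) from
      (RingHom.map_det (Int.castRingHom ℝ) B).symm]
    exact_mod_cast hnz
  -- some entry of A⁻¹ is not an integer
  have hnonint : ∃ k j, ¬ ∃ m : ℤ, A⁻¹ k j = (m : ℝ) := by
    by_contra h
    push_neg at h
    choose C0 hC using h
    set C : Matrix (Fin d) (Fin d) ℤ := Matrix.of C0 with hCdef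
    have hCA : C.map (Int.cast : ℤ → ℝ) = A⁻¹ := by
      ext k j; simp [hCdef, Matrix.map_apply, hC]
    have hmul : B * C = 1 := by
      have : (B * C).map (Int.cast : ℤ → ℝ) = (1 : Matrix (Fin d) (Fin d) ℝ) := by
        have hmm : (B * C).map (Int.cast : ℤ → ℝ)
            = B.map (Int.cast : ℤ → ℝ) * C.map (Int.cast : ℤ → ℝ) := by
          ext i j
          simp [Matrix.map_apply, Matrix.mul_apply]
        rw [hmm, hCA, ← hA, Matrix.mul_nonsing_inv A (isUnit_iff_ne_zero.mpr hAdet)]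
      have hinj : Function.Injective (fun M : Matrix (Fin d) (Fin d) ℤ =>
          M.map (Int.cast : ℤ → ℝ)) := by
        intro M N hMN
        ext i j
        have := congrFun (congrFun hMN i) j
        simpa [Matrix.map_apply] using this
      have h1 : (1 : Matrix (Fin d) (Fin d) ℤ).map (Int.cast : ℤ → ℝ) = 1 := by
        simp
      exact hinj (by simpa [h1] using this)
    have hu : IsUnit B.det := by
      have := congrArg Matrix.det hmul
      rw [Matrix.det_mul, Matrix.det_one] at this
      exact IsUnit.of_mul_eq_one _ this
    rcases Int.isUnit_iff.mp hu with h1 | h1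
    · exact hdet.1 h1
    · exact hdet.2 h1
  obtain ⟨k0, j, hk0⟩ := hnonint
  refine ⟨j, fun k => A⁻¹ k j, ?_, ⟨k0, hk0⟩, ?_, ?_, ?_⟩
  · intro i
    have := Matrix.mul_nonsing_inv A (isUnit_iff_ne_zero.mpr hAdet)
    have h2 := congrFun (congrFun this i) j
    rw [Matrix.mul_apply] at h2
    simpa [hA, Matrix.map_apply, Matrix.one_apply] using h2
  · -- integer vector z
    have hsum : ∀ i, ∑ k, A⁻¹ k j * (B i k : ℝ) = (if i = j then 1 else 0) := by
      intro i
      have := Matrix.mul_nonsing_inv A (isUnit_iff_ne_zero.mpr hAdet)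
      have h2 := congrFun (congrFun this i) j
      rw [Matrix.mul_apply] at h2
      simp only [hA, Matrix.map_apply, Matrix.one_apply] at h2 ⊢
      rw [← h2]
      exact Finset.sum_congr rfl (fun k _ => mul_comm _ _)
    refine ⟨fun i => (if i = j then 1 else 0) - ∑ k, ⌊A⁻¹ k j⌋ * B i k, ?_, ?_⟩
    · intro i
      have : ∀ k, Int.fract (A⁻¹ k j) * (B i k : ℝ)
          = A⁻¹ k j * (B i k : ℝ) - (⌊A⁻¹ k j⌋ : ℝ) * (B i k : ℝ) := by
        intro k; rw [Int.fract]; ring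
      rw [Finset.sum_congr rfl (fun k _ => this k), Finset.sum_sub_distrib, hsum i]
      push_cast
      split <;> ring
    · intro hz0
      -- then fract vector is in kernel of A, hence zero
      have hfz : ∀ i, ∑ k, Int.fract (A⁻¹ k j) * A i k = 0 := by
        intro i
        have h := congrFun hz0 i
        simp only [Pi.zero_apply] at h
        have : ((if i = j then 1 else 0 : ℤ) - ∑ k, ⌊A⁻¹ k j⌋ * B i k : ℤ) = 0 := h
        have hc : (((if i = j then 1 else 0 : ℤ) - ∑ k, ⌊A⁻¹ k j⌋ * B i k : ℤ) : ℝ) = 0 := by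
          exact_mod_cast this
        push_cast at hc
        have hsplit : ∀ k, Int.fract (A⁻¹ k j) * A i k
            = A⁻¹ k j * (B i k : ℝ) - (⌊A⁻¹ k j⌋ : ℝ) * (B i k : ℝ) := by
          intro k; simp only [hA, Matrix.map_apply, Int.fract]; ring
        rw [Finset.sum_congr rfl (fun k _ => hsplit k), Finset.sum_sub_distrib, hsum i]
        linarith [hc]
      have hmv : A.mulVec (fun k => Int.fract (A⁻¹ k j)) = 0 := by
        funext i
        show ∑ k, A i k * Int.fract (A⁻¹ k j) = 0
        rw [← hfz i]
        exact Finset.sum_congr rfl (fun k _ => mul_comm _ _)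
      have hf0 : (fun k => Int.fract (A⁻¹ k j)) = 0 := by
        have h1 : A⁻¹.mulVec (A.mulVec (fun k => Int.fract (A⁻¹ k j))) = 0 := by
          rw [hmv, Matrix.mulVec_zero]
        rw [Matrix.mulVec_mulVec, Matrix.nonsing_inv_mul A (isUnit_iff_ne_zero.mpr hAdet), Matrix.one_mulVec] at h1
        exact h1
      have : Int.fract (A⁻¹ k0 j) = 0 := congrFun hf0 k0
      refine hk0 ⟨⌊A⁻¹ k0 j⌋, ?_⟩
      rw [Int.fract] at this
      linarith
  · exact fun k => ⟨Int.fract_nonneg _, Int.fract_lt_one _⟩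
  · refine ⟨k0, lt_of_le_of_ne (Int.fract_nonneg _) (fun h => hk0 ?_)⟩
    refine ⟨⌊A⁻¹ k0 j⌋, ?_⟩
    have h' : Int.fract (A⁻¹ k0 j) = 0 := h.symm
    rw [Int.fract] at h'
    linarith
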